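/- For each k ∈ {1,…,n}, let Δ_{k,1}, …, Δ_{k,n_k} be nonnegative reals and let Δ_k := Σ_{i=1}^{n_k} Δ_{k,i}. Let C := Σ_{k=1}^n Δ_k and δ := max_{k=1}^n Δ_k. Then for any lower transition rate operator Q̲ on ℝ^𝒳 such that δ‖Q̲‖ ≤ 1, one has ‖∏_{k=1}^n (∏_{i=1}^{n_k} (I+Δ_{k,i}Q̲)) − ∏_{k=1}^n (I+Δ_kQ̲)‖ ≤ δ·C·‖Q̲‖², where the products denote operator compositions in the given order, ‖Q̲‖ := sup{‖Q̲f‖ : ‖f‖ = 1}, and for maps A, B : ℝ^𝒳 → ℝ^𝒳, ‖A − B‖ := sup{‖Af − Bf‖ : f ∈ ℝ^𝒳, ‖f‖ = 1}. -/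

import Mathlib

open scoped BigOperators

/-- A lower transition rate operator on `ℝ^𝒳`: maps constants to zero (LR1), is
nonnegative on off-diagonal indicators (LR2), super-additive (LR3), and
non-negatively homogeneous (LR4). -/
def IsLowerTransitionRateOperator {X : Type*} [Fintype X] [DecidableEq X]
    (Q : (X → ℝ) → (X → ℝ)) : Prop :=
  (∀ c : ℝ, Q (fun _ => c) = 0) ∧
  (∀ x y : X, y ≠ x → 0 ≤ Q (Pi.single y 1) x) ∧
  (∀ f g : X → ℝ, ∀ x : X, Q f x + Q g x ≤ Q (f + g) x) ∧
  (∀ c : ℝ, 0 ≤ c → ∀ f : X → ℝ, Q (c • f) = c • Q f)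

/-- The distance `‖A − B‖ = sup{‖Af − Bf‖ : ‖f‖ = 1}` between two maps of `ℝ^𝒳`,
where `‖·‖` is the supremum norm. -/
noncomputable def opDist {X : Type*} [Fintype X]
    (A B : (X → ℝ) → (X → ℝ)) : ℝ :=
  ⨆ f : {f : X → ℝ // ‖f‖ = 1}, ‖A f.1 - B f.1‖

/-- The operator norm `‖A‖ = sup{‖Af‖ : ‖f‖ = 1}` of a map of `ℝ^𝒳`. -/
noncomputable def opNorm {X : Type*} [Fintype X] (A : (X → ℝ) → (X → ℝ)) : ℝ :=
  ⨆ f : {f : X → ℝ // ‖f‖ = 1}, ‖A f.1‖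

/-- The composition `T 0 ∘ T 1 ∘ ⋯ ∘ T (n-1)` of a finite family of operators,
in the given order. -/
def compFamily {X : Type*} {n : ℕ} (T : Fin n → ((X → ℝ) → (X → ℝ))) :
    (X → ℝ) → (X → ℝ) :=
  (List.ofFn T).foldr (· ∘ ·) id

namespace Stmt17Aux

variable {X : Type*} [Fintype X] [DecidableEq X]

/-- composition of a list of operators -/
def listComp (l : List ((X → ℝ) → (X → ℝ))) : (X → ℝ) → (X → ℝ) :=
  l.foldr (· ∘ ·) id

@[simp] lemma listComp_nil (f : X → ℝ) : listComp [] f = f := rfl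
@[simp] lemma listComp_cons (a : (X → ℝ) → (X → ℝ)) (l : List _) (f : X → ℝ) :
    listComp (a :: l) f = a (listComp l f) := rfl

lemma compFamily_eq_listComp {n : ℕ} (T : Fin n → ((X → ℝ) → (X → ℝ))) :
    compFamily T = listComp (List.ofFn T) := rfl

variable {Q : (X → ℝ) → (X → ℝ)} (hQ : IsLowerTransitionRateOperator Q)

include hQ

lemma Q_zero : Q 0 = 0 := by
  have := hQ.2.2.2 0 le_rfl 0
  simpa using this

lemma Q_shift (f : X → ℝ) (c : ℝ) : Q (f + fun _ => c) = Q f := by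
  funext x
  have h1 := hQ.2.2.1 f (fun _ => c) x
  have h2 := hQ.2.2.1 (f + fun _ => c) (fun _ => -c) x
  have hc := hQ.1 c
  have hc' := hQ.1 (-c)
  have he : (f + fun _ => c) + (fun _ => -c) = f := by funext y; simp
  rw [he] at h2
  rw [hc] at h1
  rw [hc'] at h2
  simp only [Pi.zero_apply] at h1 h2
  linarith

lemma Q_sum_le {Y : Type*} (s : Finset Y) (g : Y → X → ℝ) (x : X) :
    ∑ y ∈ s, Q (g y) x ≤ Q (∑ y ∈ s, g y) x := by
  classical
  induction s using Finset.cons_induction with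
  | empty => simp [Q_zero hQ]
  | cons a s ha ih =>
    rw [Finset.sum_cons, Finset.sum_cons]
    calc Q (g a) x + ∑ y ∈ s, Q (g y) x ≤ Q (g a) x + Q (∑ y ∈ s, g y) x := by linarith
    _ ≤ Q (g a + ∑ y ∈ s, g y) x := hQ.2.2.1 _ _ x

lemma Q_nonneg_lb (h : X → ℝ) (hh : ∀ y, 0 ≤ h y) (x : X) :
    ∑ y : X, h y * Q (Pi.single y 1) x ≤ Q h x := by
  have hdecomp : ∑ y : X, (h y • (Pi.single y 1 : X → ℝ)) = h := by
    funext z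
    simp [Finset.sum_apply, Pi.single_apply, mul_comm]
  calc ∑ y : X, h y * Q (Pi.single y 1) x
      = ∑ y : X, Q (h y • (Pi.single y 1 : X → ℝ)) x := by
        refine Finset.sum_congr rfl fun y _ => ?_
        rw [hQ.2.2.2 (h y) (hh y) ((Pi.single y 1 : X → ℝ))]; simp
    _ ≤ Q (∑ y : X, (h y • (Pi.single y 1 : X → ℝ))) x := Q_sum_le hQ _ _ x
    _ = Q h x := by rw [hdecomp]

/-- crude bound -/
lemma Q_bdd : ∃ K : ℝ, 0 ≤ K ∧ ∀ f : X → ℝ, ‖Q f‖ ≤ K * ‖f‖ := by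
  classical
  refine ⟨2 * ∑ y : X, ‖Q (Pi.single y 1)‖, by positivity, fun f => ?_⟩
  set K := 2 * ∑ y : X, ‖Q (Pi.single y 1)‖ with hK
  have hK0 : 0 ≤ K := by positivity
  have lb : ∀ g : X → ℝ, ∀ x, -(K * ‖g‖) ≤ Q g x := by
    intro g x
    have hshift : Q g = Q (g + fun _ => ‖g‖) := (Q_shift hQ g ‖g‖).symm
    have hpos : ∀ y, 0 ≤ g y + ‖g‖ := fun y => by
      have := neg_abs_le (g y)
      have h2 : |g y| ≤ ‖g‖ := by
        simpa [Real.norm_eq_abs] using norm_le_pi_norm g y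
      linarith
    have hlb := Q_nonneg_lb hQ (g + fun _ => ‖g‖) hpos x
    have hterm : ∀ y : X, -(2 * ‖g‖ * ‖Q (Pi.single y 1)‖) ≤
        (g y + ‖g‖) * Q (Pi.single y 1) x := by
      intro y
      have h1 : |Q (Pi.single y 1) x| ≤ ‖Q (Pi.single y 1)‖ := by
        simpa [Real.norm_eq_abs] using norm_le_pi_norm (Q (Pi.single y 1)) x
      have h2 : |g y| ≤ ‖g‖ := by
        simpa [Real.norm_eq_abs] using norm_le_pi_norm g y
      have h3 : g y + ‖g‖ ≤ 2 * ‖g‖ := by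
        have := le_abs_self (g y); linarith
      nlinarith [hpos y, abs_nonneg (Q (Pi.single y 1) x), neg_abs_le (Q (Pi.single y 1) x)]
    have : ∑ y : X, -(2 * ‖g‖ * ‖Q (Pi.single y 1)‖) ≤
        ∑ y : X, (g y + ‖g‖) * Q (Pi.single y 1) x :=
      Finset.sum_le_sum fun y _ => hterm y
    have hsum : ∑ y : X, -(2 * ‖g‖ * ‖Q (Pi.single y 1)‖) = -(K * ‖g‖) := by
      rw [Finset.sum_neg_distrib, ← Finset.mul_sum, hK]; ring
    calc -(K * ‖g‖) = ∑ y : X, -(2 * ‖g‖ * ‖Q (Pi.single y 1)‖) := hsum.symm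
      _ ≤ ∑ y : X, (g y + ‖g‖) * Q (Pi.single y 1) x := this
      _ ≤ Q (g + fun _ => ‖g‖) x := by
          simpa using hlb
      _ = Q g x := by rw [← hshift]
  have ub : ∀ x, Q f x ≤ K * ‖f‖ := by
    intro x
    have h1 := hQ.2.2.1 f (-f) x
    have : f + (-f) = (fun _ => (0:ℝ)) := by funext y; simp
    rw [this, hQ.1 0] at h1
    simp only [Pi.zero_apply] at h1
    have h2 := lb (-f) x
    rw [norm_neg] at h2
    linarith
  rw [pi_norm_le_iff_of_nonneg (by positivity)]
  intro x
  rw [Real.norm_eq_abs, abs_le]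
  exact ⟨by have := lb f x; linarith, ub x⟩

variable [Nonempty X]

noncomputable instance : Nonempty {f : X → ℝ // ‖f‖ = 1} :=
  ⟨⟨fun _ => 1, by simp⟩⟩

lemma opNorm_nonneg' : 0 ≤ opNorm Q :=
  Real.iSup_nonneg fun f => norm_nonneg _

lemma norm_Q_le (f : X → ℝ) : ‖Q f‖ ≤ opNorm Q * ‖f‖ := by
  obtain ⟨K, hK0, hK⟩ := Q_bdd hQ
  rcases eq_or_ne f 0 with rfl | hf
  · simp [Q_zero hQ]
  · have hfn : 0 < ‖f‖ := norm_pos_iff.mpr hf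
    set u : X → ℝ := ‖f‖⁻¹ • f with hu
    have hun : ‖u‖ = 1 := by
      rw [hu, norm_smul, Real.norm_eq_abs, abs_of_pos (inv_pos.mpr hfn), inv_mul_cancel₀ hfn.ne']
    have hfu : f = ‖f‖ • u := by
      rw [hu, smul_smul, mul_inv_cancel₀ hfn.ne', one_smul]
    have hQf : Q f = ‖f‖ • Q u := by
      conv_lhs => rw [hfu]
      rw [hQ.2.2.2 ‖f‖ hfn.le u]
    have hbdd : BddAbove (Set.range fun g : {f : X → ℝ // ‖f‖ = 1} => ‖Q g.1‖) := by
      refine ⟨K, ?_⟩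
      rintro r ⟨g, rfl⟩
      calc ‖Q g.1‖ ≤ K * ‖g.1‖ := hK g.1
        _ = K := by rw [g.2, mul_one]
    have hle : ‖Q u‖ ≤ opNorm Q := le_ciSup hbdd (⟨u, hun⟩ : {f : X → ℝ // ‖f‖ = 1})
    rw [hQf, norm_smul, norm_norm, mul_comm]
    exact mul_le_mul_of_nonneg_right hle hfn.le

lemma Q_lb_nonneg (h : X → ℝ) (hh : ∀ y, 0 ≤ h y) (x : X) :
    -(opNorm Q * h x) ≤ Q h x := by
  have hdec := Q_nonneg_lb hQ h hh x
  have hsingle : ‖(Pi.single x (1:ℝ) : X → ℝ)‖ = 1 := by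
    rw [Pi.norm_single]; norm_num
  have hx : -(opNorm Q) ≤ Q (Pi.single x 1) x := by
    have h1 : ‖Q (Pi.single x (1:ℝ) : X → ℝ)‖ ≤ opNorm Q := by
      have := norm_Q_le hQ (Pi.single x 1 : X → ℝ)
      rwa [hsingle, mul_one] at this
    have h2 : |Q (Pi.single x (1:ℝ) : X → ℝ) x| ≤ ‖Q (Pi.single x (1:ℝ) : X → ℝ)‖ := by
      simpa [Real.norm_eq_abs] using norm_le_pi_norm (Q (Pi.single x (1:ℝ) : X → ℝ)) x
    have := neg_abs_le (Q (Pi.single x (1:ℝ) : X → ℝ) x)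
    linarith
  have hrest : h x * Q (Pi.single x 1) x ≤ ∑ y : X, h y * Q (Pi.single y 1) x := by
    have : ∀ y ∈ Finset.univ \ {x}, 0 ≤ h y * Q (Pi.single y (1:ℝ) : X → ℝ) x := by
      intro y hy
      simp only [Finset.mem_sdiff, Finset.mem_singleton] at hy
      exact mul_nonneg (hh y) (hQ.2.1 x y hy.2)
    have hsplit : ∑ y : X, h y * Q (Pi.single y 1) x =
        h x * Q (Pi.single x 1) x + ∑ y ∈ Finset.univ \ {x}, h y * Q (Pi.single y 1) x := by
      rw [← Finset.sum_sdiff (Finset.singleton_subset_iff.mpr (Finset.mem_univ x))]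
      rw [Finset.sum_singleton]; ring
    rw [hsplit]
    have := Finset.sum_nonneg this
    linarith
  have hmul : -(opNorm Q * h x) ≤ h x * Q (Pi.single x 1) x := by
    nlinarith [hh x, hx, opNorm_nonneg' (Q := Q) (hQ := hQ)]
  linarith


lemma Q_lip (f g : X → ℝ) : ‖Q f - Q g‖ ≤ opNorm Q * ‖f - g‖ := by
  have hM := opNorm_nonneg' hQ
  have hfg : ‖Q (f - g)‖ ≤ opNorm Q * ‖f - g‖ := norm_Q_le hQ _
  have hgf : ‖Q (g - f)‖ ≤ opNorm Q * ‖g - f‖ := norm_Q_le hQ _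
  rw [norm_sub_rev g f] at hgf
  rw [pi_norm_le_iff_of_nonneg (mul_nonneg hM (norm_nonneg _))]
  intro x
  have h1 := hQ.2.2.1 (f - g) g x
  rw [sub_add_cancel] at h1
  have h2 := hQ.2.2.1 (g - f) f x
  rw [sub_add_cancel] at h2
  have h3 : |Q (f - g) x| ≤ opNorm Q * ‖f - g‖ :=
    le_trans (by simpa [Real.norm_eq_abs] using norm_le_pi_norm (Q (f - g)) x) hfg
  have h4 : |Q (g - f) x| ≤ opNorm Q * ‖f - g‖ :=
    le_trans (by simpa [Real.norm_eq_abs] using norm_le_pi_norm (Q (g - f)) x) hgf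
  rw [Real.norm_eq_abs, abs_le]
  constructor
  · have := neg_abs_le (Q (f - g) x); simp only [Pi.sub_apply]; linarith [abs_le.mp h3]
  · have := neg_abs_le (Q (g - f) x); simp only [Pi.sub_apply]; linarith [abs_le.mp h4]

end Stmt17Aux

namespace Stmt17Aux

/-- Euler step operator -/
def step {X : Type*} [Fintype X] (Q : (X → ℝ) → (X → ℝ)) (d : ℝ) :
    (X → ℝ) → (X → ℝ) := fun g => g + d • Q g

variable {X : Type*} [Fintype X] [DecidableEq X] [Nonempty X]
variable {Q : (X → ℝ) → (X → ℝ)} (hQ : IsLowerTransitionRateOperator Q)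

include hQ

lemma step_lb (d : ℝ) (hd : 0 ≤ d) (hdM : d * opNorm Q ≤ 1) (h : X → ℝ) (x : X) :
    -‖h‖ ≤ step Q d h x := by
  have hM := opNorm_nonneg' hQ
  have hpos : ∀ y, 0 ≤ h y + ‖h‖ := fun y => by
    have h2 : |h y| ≤ ‖h‖ := by
      simpa [Real.norm_eq_abs] using norm_le_pi_norm h y
    linarith [neg_abs_le (h y)]
  have hsh : Q h = Q (h + fun _ => ‖h‖) := (Q_shift hQ h ‖h‖).symm
  have hlb := Q_lb_nonneg hQ (h + fun _ => ‖h‖) hpos x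
  simp only [Pi.add_apply] at hlb
  have hx : |h x| ≤ ‖h‖ := by
    simpa [Real.norm_eq_abs] using norm_le_pi_norm h x
  simp only [step, Pi.add_apply, Pi.smul_apply, smul_eq_mul]
  rw [hsh]
  nlinarith [mul_le_mul_of_nonneg_left hlb hd, abs_le.mp hx,
    mul_nonneg (hpos x) (mul_nonneg hd hM)]

lemma step_nonexp (d : ℝ) (hd : 0 ≤ d) (hdM : d * opNorm Q ≤ 1) (f g : X → ℝ) :
    ‖step Q d f - step Q d g‖ ≤ ‖f - g‖ := by
  rw [pi_norm_le_iff_of_nonneg (norm_nonneg _)]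
  intro x
  have key : ∀ u v : X → ℝ, -‖u - v‖ ≤ step Q d u x - step Q d v x := by
    intro u v
    have h1 := hQ.2.2.1 (u - v) v x
    rw [sub_add_cancel] at h1
    have h2 := step_lb hQ d hd hdM (u - v) x
    simp only [step, Pi.add_apply, Pi.smul_apply, smul_eq_mul, Pi.sub_apply] at h2 ⊢
    nlinarith [mul_le_mul_of_nonneg_left (by linarith : Q (u - v) x ≤ Q u x - Q v x) hd]
  have h1 := key f g
  have h2 := key g f
  rw [norm_sub_rev g f] at h2
  rw [Real.norm_eq_abs, abs_le]
  constructor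
  · simpa using h1
  · have : step Q d g x - step Q d f x = -(step Q d f x - step Q d g x) := by ring
    simp only [Pi.sub_apply] at h1 h2 ⊢
    linarith

lemma step_zero_eq (d : ℝ) : step Q d 0 = 0 := by
  simp [step, Q_zero hQ]

lemma step_norm_le (d : ℝ) (hd : 0 ≤ d) (hdM : d * opNorm Q ≤ 1) (f : X → ℝ) :
    ‖step Q d f‖ ≤ ‖f‖ := by
  have := step_nonexp hQ d hd hdM f 0
  rwa [step_zero_eq hQ, sub_zero, sub_zero] at this

omit hQ
omit [DecidableEq X] [Nonempty X]

lemma listComp_norm_le (l : List ((X → ℝ) → (X → ℝ)))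
    (hl : ∀ T ∈ l, ∀ f : X → ℝ, ‖T f‖ ≤ ‖f‖) (f : X → ℝ) :
    ‖listComp l f‖ ≤ ‖f‖ := by
  induction l with
  | nil => simp
  | cons a l ih =>
    calc ‖a (listComp l f)‖ ≤ ‖listComp l f‖ := hl a (by simp) _
      _ ≤ ‖f‖ := ih fun T hT => hl T (by simp [hT])

lemma listComp_lip (l : List ((X → ℝ) → (X → ℝ)))
    (hl : ∀ T ∈ l, ∀ u v : X → ℝ, ‖T u - T v‖ ≤ ‖u - v‖) (u v : X → ℝ) :
    ‖listComp l u - listComp l v‖ ≤ ‖u - v‖ := by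
  induction l with
  | nil => simp
  | cons a l ih =>
    calc ‖a (listComp l u) - a (listComp l v)‖
        ≤ ‖listComp l u - listComp l v‖ := hl a (by simp) _ _
      _ ≤ ‖u - v‖ := ih fun T hT => hl T (by simp [hT])

lemma telescope (l : List ((((X → ℝ) → (X → ℝ)) × ((X → ℝ) → (X → ℝ))) × ℝ))
    (hA : ∀ p ∈ l, ∀ u v : X → ℝ, ‖p.1.1 u - p.1.1 v‖ ≤ ‖u - v‖)
    (hB : ∀ p ∈ l, ∀ f : X → ℝ, ‖p.1.2 f‖ ≤ ‖f‖)
    (hε : ∀ p ∈ l, 0 ≤ p.2)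
    (hAB : ∀ p ∈ l, ∀ f : X → ℝ, ‖p.1.1 f - p.1.2 f‖ ≤ p.2 * ‖f‖) (f : X → ℝ) :
    ‖listComp (l.map (·.1.1)) f - listComp (l.map (·.1.2)) f‖ ≤
      (l.map (·.2)).sum * ‖f‖ := by
  induction l with
  | nil => simp
  | cons p l ih =>
    simp only [List.map_cons, listComp_cons, List.sum_cons]
    set u := listComp (l.map (·.1.1)) f with hu
    set v := listComp (l.map (·.1.2)) f with hv
    have h1 : ‖p.1.1 u - p.1.1 v‖ ≤ ‖u - v‖ := hA p (by simp) u v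
    have h2 : ‖p.1.1 v - p.1.2 v‖ ≤ p.2 * ‖v‖ := hAB p (by simp) v
    have hvf : ‖v‖ ≤ ‖f‖ := by
      refine listComp_norm_le _ ?_ f
      intro T hT g
      obtain ⟨q, hq, rfl⟩ := List.mem_map.mp hT
      exact hB q (by simp [hq]) g
    have huv : ‖u - v‖ ≤ (l.map (·.2)).sum * ‖f‖ := by
      refine ih (fun q hq => hA q (by simp [hq])) (fun q hq => hB q (by simp [hq]))
        (fun q hq => hε q (by simp [hq])) (fun q hq => hAB q (by simp [hq]))
    have hsplit : p.1.1 u - p.1.2 v = (p.1.1 u - p.1.1 v) + (p.1.1 v - p.1.2 v) := by abel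
    calc ‖p.1.1 u - p.1.2 v‖ ≤ ‖p.1.1 u - p.1.1 v‖ + ‖p.1.1 v - p.1.2 v‖ := by
          rw [hsplit]; exact norm_add_le _ _
      _ ≤ (l.map (·.2)).sum * ‖f‖ + p.2 * ‖f‖ := by
          have := mul_le_mul_of_nonneg_left hvf (hε p (by simp))
          linarith
      _ = (p.2 + (l.map (·.2)).sum) * ‖f‖ := by ring

omit [Fintype X]
lemma listComp_map_step_eq {Y : Type*} [Fintype Y] {QQ : (Y → ℝ) → (Y → ℝ)} {k : ℕ}
    (dd : Fin k → ℝ) :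
    compFamily (fun i => step QQ (dd i)) = listComp ((List.ofFn dd).map (step QQ)) := by
  rw [List.map_ofFn]
  rfl

end Stmt17Aux

namespace Stmt17Aux
variable {X : Type*} [Fintype X] [DecidableEq X] [Nonempty X]
variable {Q : (X → ℝ) → (X → ℝ)} (hQ : IsLowerTransitionRateOperator Q)
include hQ

lemma drift (l : List ℝ) (hl : ∀ d ∈ l, 0 ≤ d ∧ d * opNorm Q ≤ 1) (f : X → ℝ) :
    ‖listComp (l.map (step Q)) f - f‖ ≤ l.sum * opNorm Q * ‖f‖ := by
  have hM := opNorm_nonneg' hQ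
  induction l with
  | nil => simp
  | cons d l ih =>
    have hd := hl d (by simp)
    simp only [List.map_cons, listComp_cons, List.sum_cons]
    set g := listComp (l.map (step Q)) f with hg
    have hgf : ‖g‖ ≤ ‖f‖ := by
      refine listComp_norm_le _ ?_ f
      intro T hT u
      obtain ⟨e, he, rfl⟩ := List.mem_map.mp hT
      exact step_norm_le hQ e (hl e (by simp [he])).1 (hl e (by simp [he])).2 u
    have hQg : ‖Q g‖ ≤ opNorm Q * ‖f‖ :=
      le_trans (norm_Q_le hQ g) (mul_le_mul_of_nonneg_left hgf hM)
    have ihg : ‖g - f‖ ≤ l.sum * opNorm Q * ‖f‖ := ih fun e he => hl e (by simp [he])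
    have hsplit : step Q d g - f = (g - f) + d • Q g := by
      simp only [step]; abel
    calc ‖step Q d g - f‖ ≤ ‖g - f‖ + ‖d • Q g‖ := by
          rw [hsplit]; exact norm_add_le _ _
      _ ≤ l.sum * opNorm Q * ‖f‖ + d * (opNorm Q * ‖f‖) := by
          rw [norm_smul, Real.norm_eq_abs, abs_of_nonneg hd.1]
          have := mul_le_mul_of_nonneg_left hQg hd.1
          linarith
      _ = (d + l.sum) * opNorm Q * ‖f‖ := by ring

lemma group_est (l : List ℝ) (hl : ∀ d ∈ l, 0 ≤ d ∧ d * opNorm Q ≤ 1) (f : X → ℝ) :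
    ‖listComp (l.map (step Q)) f - step Q l.sum f‖ ≤ l.sum ^ 2 * opNorm Q ^ 2 * ‖f‖ := by
  have hM := opNorm_nonneg' hQ
  induction l with
  | nil => simp [step]
  | cons d l ih =>
    have hd := hl d (by simp)
    have hsum0 : 0 ≤ l.sum := List.sum_nonneg fun e he => (hl e (by simp [he])).1
    simp only [List.map_cons, listComp_cons, List.sum_cons]
    set g := listComp (l.map (step Q)) f with hg
    have ihg : ‖g - step Q l.sum f‖ ≤ l.sum ^ 2 * opNorm Q ^ 2 * ‖f‖ :=
      ih fun e he => hl e (by simp [he])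
    have hdrift : ‖g - f‖ ≤ l.sum * opNorm Q * ‖f‖ :=
      drift hQ l (fun e he => hl e (by simp [he])) f
    have hlip : ‖Q g - Q f‖ ≤ opNorm Q * ‖g - f‖ := Q_lip hQ g f
    have hsplit : step Q d g - step Q (d + l.sum) f =
        (g - step Q l.sum f) + d • (Q g - Q f) := by
      simp only [step, add_smul, smul_sub]; abel
    calc ‖step Q d g - step Q (d + l.sum) f‖
        ≤ ‖g - step Q l.sum f‖ + ‖d • (Q g - Q f)‖ := by
          rw [hsplit]; exact norm_add_le _ _
      _ ≤ l.sum ^ 2 * opNorm Q ^ 2 * ‖f‖ + d * (opNorm Q * (l.sum * opNorm Q * ‖f‖)) := by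
          rw [norm_smul, Real.norm_eq_abs, abs_of_nonneg hd.1]
          have h1 : ‖Q g - Q f‖ ≤ opNorm Q * (l.sum * opNorm Q * ‖f‖) :=
            le_trans hlip (mul_le_mul_of_nonneg_left hdrift hM)
          have := mul_le_mul_of_nonneg_left h1 hd.1
          linarith
      _ ≤ (d + l.sum) ^ 2 * opNorm Q ^ 2 * ‖f‖ := by
          nlinarith [mul_nonneg (mul_nonneg (mul_nonneg hd.1 hd.1) (mul_nonneg hM hM))
              (norm_nonneg f),
            mul_nonneg (mul_nonneg (mul_nonneg hd.1 hsum0) (mul_nonneg hM hM)) (norm_nonneg f)]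

end Stmt17Aux


/-- For groups of step sizes `Δ_{k,i} ≥ 0` with group sums `Δ_k = Σ_i Δ_{k,i}`, total
`C = Σ_k Δ_k` and mesh `δ = max_k Δ_k`, if `δ‖Q̲‖ ≤ 1` then
`‖∏_k ∏_i (I+Δ_{k,i}Q̲) − ∏_k (I+Δ_kQ̲)‖ ≤ δ C ‖Q̲‖²`. -/
theorem stmt17 {X : Type*} [Fintype X] [Nonempty X] [DecidableEq X]
    (Ql : (X → ℝ) → (X → ℝ)) (hQl : IsLowerTransitionRateOperator Ql)
    {n : ℕ} (m : Fin (n + 1) → ℕ) (Δ : (k : Fin (n + 1)) → Fin (m k) → ℝ)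
    (hΔ0 : ∀ k i, 0 ≤ Δ k i)
    (hδQl : (⨆ k, ∑ i, Δ k i) * opNorm Ql ≤ 1) :
    opDist
        (compFamily (fun k => compFamily (fun i => fun g => g + Δ k i • Ql g)))
        (compFamily (fun k => fun g => g + (∑ i, Δ k i) • Ql g)) ≤
      (⨆ k, ∑ i, Δ k i) * (∑ k, ∑ i, Δ k i) * opNorm Ql ^ 2 := by
  classical
  set M := opNorm Ql with hM
  have hM0 : 0 ≤ M := Stmt17Aux.opNorm_nonneg' hQl
  set δ := ⨆ k, ∑ i, Δ k i with hδ
  have hδk : ∀ k, ∑ i, Δ k i ≤ δ := fun k =>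
    le_ciSup (f := fun k => ∑ i, Δ k i) (Set.Finite.bddAbove (Set.finite_range _)) k
  have hΔk0 : ∀ k, 0 ≤ ∑ i, Δ k i := fun k => Finset.sum_nonneg fun i _ => hΔ0 k i
  have hδ0 : 0 ≤ δ := le_trans (hΔk0 0) (hδk 0)
  have hkM : ∀ k, (∑ i, Δ k i) * M ≤ 1 := fun k =>
    le_trans (mul_le_mul_of_nonneg_right (hδk k) hM0) hδQl
  have hdM : ∀ k i, Δ k i * M ≤ 1 := fun k i =>
    le_trans (mul_le_mul_of_nonneg_right
      (le_trans (Finset.single_le_sum (fun j _ => hΔ0 k j) (Finset.mem_univ i)) (hδk k)) hM0)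
      hδQl
  set A : Fin (n + 1) → (X → ℝ) → (X → ℝ) :=
    fun k => compFamily (fun i => Stmt17Aux.step Ql (Δ k i)) with hA
  set B : Fin (n + 1) → (X → ℝ) → (X → ℝ) :=
    fun k => Stmt17Aux.step Ql (∑ i, Δ k i) with hB
  have hAlist : ∀ k, A k = Stmt17Aux.listComp ((List.ofFn (Δ k)).map (Stmt17Aux.step Ql)) :=
    fun k => Stmt17Aux.listComp_map_step_eq (Δ k)
  have hAk_lip : ∀ k, ∀ u v : X → ℝ, ‖A k u - A k v‖ ≤ ‖u - v‖ := by
    intro k u v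
    rw [hAlist k]
    refine Stmt17Aux.listComp_lip _ ?_ u v
    intro T hT u' v'
    obtain ⟨e, he, rfl⟩ := List.mem_map.mp hT
    obtain ⟨i, rfl⟩ := List.mem_ofFn.mp he
    exact Stmt17Aux.step_nonexp hQl _ (hΔ0 k i) (hdM k i) u' v'
  have hBk_le : ∀ k, ∀ f : X → ℝ, ‖B k f‖ ≤ ‖f‖ := fun k f =>
    Stmt17Aux.step_norm_le hQl _ (hΔk0 k) (hkM k) f
  have hABk : ∀ k, ∀ f : X → ℝ, ‖A k f - B k f‖ ≤ (∑ i, Δ k i) ^ 2 * M ^ 2 * ‖f‖ := by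
    intro k f
    rw [hAlist k]
    have hsum : (List.ofFn (Δ k)).sum = ∑ i, Δ k i := List.sum_ofFn
    have := Stmt17Aux.group_est hQl (List.ofFn (Δ k)) ?_ f
    · rwa [hsum] at this
    · intro d hd
      obtain ⟨i, rfl⟩ := List.mem_ofFn.mp hd
      exact ⟨hΔ0 k i, hdM k i⟩
  have key : ∀ f : X → ℝ, ‖compFamily A f - compFamily B f‖ ≤
      (∑ k, (∑ i, Δ k i) ^ 2 * M ^ 2) * ‖f‖ := by
    intro f
    have := Stmt17Aux.telescope
      (List.ofFn (fun k => ((A k, B k), (∑ i, Δ k i) ^ 2 * M ^ 2)))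
      (by intro p hp u v
          obtain ⟨k, rfl⟩ := List.mem_ofFn.mp hp
          exact hAk_lip k u v)
      (by intro p hp g
          obtain ⟨k, rfl⟩ := List.mem_ofFn.mp hp
          exact hBk_le k g)
      (by intro p hp
          obtain ⟨k, rfl⟩ := List.mem_ofFn.mp hp
          positivity)
      (by intro p hp g
          obtain ⟨k, rfl⟩ := List.mem_ofFn.mp hp
          exact hABk k g) f
    rw [List.map_ofFn, List.map_ofFn, List.map_ofFn, List.sum_ofFn] at this
    exact this
  have hsumle : (∑ k, (∑ i, Δ k i) ^ 2 * M ^ 2) ≤ δ * (∑ k, ∑ i, Δ k i) * M ^ 2 := by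
    calc ∑ k, (∑ i, Δ k i) ^ 2 * M ^ 2 ≤ ∑ k, δ * (∑ i, Δ k i) * M ^ 2 :=
          Finset.sum_le_sum fun k _ => by
            nlinarith [mul_nonneg (mul_nonneg (sub_nonneg.mpr (hδk k)) (hΔk0 k))
              (mul_nonneg hM0 hM0)]
      _ = δ * (∑ k, ∑ i, Δ k i) * M ^ 2 := by
          rw [← Finset.sum_mul, ← Finset.mul_sum]
  unfold opDist
  refine ciSup_le fun f => ?_
  have h := key f.1
  rw [f.2, mul_one] at h
  exact le_trans h hsumle
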